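/- arXiv:1706.00142 — 3 statements merged into one kernel-verified Lean document; each statement's English description precedes it below -/
import Mathlib

section
/- Suppose (Φ₁, ξ₁) ∈ 𝒜 satisfies ⟨Φ₁,ξ₁⟩_F = 1 and minimizes the energy, i.e. D[Φ₁] + S[ξ₁] ≤ D[Φ] + S[ξ] for every (Φ,ξ) ∈ 𝒜 with ⟨Φ,ξ⟩_F = 1. Set ω₁ = D[Φ₁] + S[ξ₁]. Then (ω₁, Φ₁, ξ₁) is a weak solution of the sloshing problem with surface tension on (D, F) with Bond number Bo. -/
open MeasureTheory RealInnerProductSpace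

noncomputable section

abbrev E2 : Type := EuclideanSpace ℝ (Fin 2)
abbrev E3 : Type := EuclideanSpace ℝ (Fin 3)

/-- Embedding of the free surface plane: `p = (x,y) ↦ (x,y,0)`. -/
def emb (p : E2) : E3 := (WithLp.equiv 2 (Fin 3 → ℝ)).symm ![p 0, p 1, 0]

/-- Dirichlet energy `D[Φ] = (1/2)∫_D ‖∇Φ‖²`. -/
def Dir (D : Set E3) (Φ : E3 → ℝ) : ℝ := (1/2) * ∫ x in D, ‖gradient Φ x‖^2

/-- Free surface energy `S[ξ] = (1/2)∫_F (ξ² + Bo⁻¹‖∇ξ‖²)`. -/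
def Surf (F : Set E2) (Bo : ℝ) (ξ : E2 → ℝ) : ℝ :=
  (1/2) * ∫ p in F, (ξ p ^ 2 + Bo⁻¹ * ‖gradient ξ p‖^2)

/-- The pairing `⟨Φ,ξ⟩_F = ∫_F Φ(x,y,0) ξ(x,y)`. -/
def pairF (F : Set E2) (Φ : E3 → ℝ) (ξ : E2 → ℝ) : ℝ := ∫ p in F, Φ (emb p) * ξ p

/-- `(ω,Φ,ξ)` is a weak solution of the sloshing problem with surface tension. -/
def IsWeakSol (D : Set E3) (F : Set E2) (Bo ω : ℝ) (Φ : E3 → ℝ) (ξ : E2 → ℝ) : Prop :=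
  ContDiff ℝ 1 Φ ∧ ContDiff ℝ 1 ξ ∧
  (∀ f : E3 → ℝ, ContDiff ℝ 1 f →
    (∫ x in D, ⟪gradient Φ x, gradient f x⟫) = ω * ∫ p in F, ξ p * f (emb p)) ∧
  (∀ g : E2 → ℝ, ContDiff ℝ 1 g →
    (∫ p in F, (ξ p * g p + Bo⁻¹ * ⟪gradient ξ p, gradient g p⟫))
      = ω * ∫ p in F, Φ (emb p) * g p)

/-- The admissible class `𝒜`: pairs of C¹ functions with zero mean over `F`. -/
def Adm (F : Set E2) (Φ : E3 → ℝ) (ξ : E2 → ℝ) : Prop :=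
  ContDiff ℝ 1 Φ ∧ ContDiff ℝ 1 ξ ∧
  (∫ p in F, Φ (emb p)) = 0 ∧ (∫ p in F, ξ p) = 0

/-! ### Auxiliary lemmas -/

lemma lin_of_quad {a b δ : ℝ} (hδ : 0 < δ)
    (h : ∀ t : ℝ, |t| < δ → 0 ≤ a * t + b * t ^ 2) : a = 0 := by
  by_contra ha
  have ha' : 0 < |a| := abs_pos.mpr ha
  set t₀ : ℝ := min (δ/2) (|a| / (2*(|b|+1))) with ht₀
  have hb1 : (0:ℝ) < |b| + 1 := by positivity
  have ht₀pos : 0 < t₀ := lt_min (by linarith) (by positivity)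
  have ht₀δ : |t₀| < δ := by
    rw [abs_of_pos ht₀pos]; exact lt_of_le_of_lt (min_le_left _ _) (by linarith)
  have h1 := h t₀ ht₀δ
  have h2 := h (-t₀) (by rwa [abs_neg])
  have h3 : t₀ ≤ |a| / (2*(|b|+1)) := min_le_right _ _
  have h4 : t₀ * (2*(|b|+1)) ≤ |a| := (le_div_iff₀ (by positivity)).mp h3
  have e2 : 0 ≤ -(a*t₀) + b*t₀^2 := by nlinarith [h2]
  have hup : |a| * t₀ ≤ b * t₀^2 := by
    rcases le_or_gt 0 a with hh | hh
    · rw [abs_of_nonneg hh]; nlinarith [e2]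
    · rw [abs_of_neg hh]; nlinarith [h1]
  have hb' : b * t₀^2 ≤ |b| * t₀^2 := mul_le_mul_of_nonneg_right (le_abs_self b) (sq_nonneg t₀)
  have h5 : |a| ≤ |b| * t₀ := le_of_mul_le_mul_right (by nlinarith) ht₀pos
  nlinarith [mul_nonneg (abs_nonneg b) ht₀pos.le]

lemma integrableOn_of_cont {n : ℕ} {s : Set (EuclideanSpace ℝ (Fin n))}
    (hs : Bornology.IsBounded s) {h : EuclideanSpace ℝ (Fin n) → ℝ} (hh : Continuous h) :
    IntegrableOn h s := by
  exact (hh.continuousOn.integrableOn_compact hs.isCompact_closure).mono_set subset_closure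

lemma continuous_gradient {E : Type*} [NormedAddCommGroup E] [InnerProductSpace ℝ E]
    [CompleteSpace E] {φ : E → ℝ} (hφ : ContDiff ℝ 1 φ) : Continuous (gradient φ) := by
  exact (InnerProductSpace.toDual ℝ E).symm.continuous.comp (hφ.continuous_fderiv one_ne_zero)

lemma continuous_emb : Continuous emb := by
  unfold emb
  refine Continuous.comp ?_ ?_
  · exact PiLp.continuous_toLp 2 (fun _ : Fin 3 => ℝ)
  · apply continuous_pi
    intro i
    fin_cases i <;> simp
    all_goals first
      | exact continuous_const
      | exact (continuous_apply _).comp (PiLp.continuous_ofLp 2 (fun _ : Fin 2 => ℝ))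

lemma gradient_comb {E : Type*} [NormedAddCommGroup E] [InnerProductSpace ℝ E] [CompleteSpace E]
    (φ ψ : E → ℝ) (hφ : Differentiable ℝ φ) (hψ : Differentiable ℝ ψ) (a b : ℝ) (x : E) :
    gradient (fun y => a * φ y + b * ψ y) x = a • gradient φ x + b • gradient ψ x := by
  simp only [gradient]
  rw [fderiv_fun_add ((hφ x).const_mul a) ((hψ x).const_mul b), fderiv_const_mul (hφ x),
    fderiv_const_mul (hψ x)]
  simp [map_add, LinearIsometryEquiv.map_smul]

lemma gradient_sub_const {E : Type*} [NormedAddCommGroup E] [InnerProductSpace ℝ E]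
    [CompleteSpace E] (φ : E → ℝ) (c : ℝ) (x : E) :
    gradient (fun y => φ y - c) x = gradient φ x := by
  simp only [gradient, fderiv_sub_const]

lemma integral_comb {X : Type*} [MeasurableSpace X] {μ : Measure X} {u v : X → ℝ}
    (hu : Integrable u μ) (hv : Integrable v μ) (a b : ℝ) :
    ∫ x, a * (u x + b * v x) ∂μ = a * ((∫ x, u x ∂μ) + b * ∫ x, v x ∂μ) := by
  have h : ∀ x, a * (u x + b * v x) = a * u x + (a*b) * v x := fun x => by ring
  simp only [h]
  rw [integral_add (hu.const_mul a) (hv.const_mul (a*b)), integral_const_mul, integral_const_mul]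
  ring

lemma norm_comb_sq {E : Type*} [NormedAddCommGroup E] [InnerProductSpace ℝ E]
    (u v : E) (s t : ℝ) :
    ‖s • u + (s*t) • v‖^2 = s^2*‖u‖^2 + (2*s^2*t)*⟪u, v⟫ + (s^2*t^2)*‖v‖^2 := by
  rw [norm_add_sq_real, norm_smul, norm_smul, real_inner_smul_left, real_inner_smul_right,
    Real.norm_eq_abs, Real.norm_eq_abs, mul_pow, mul_pow, sq_abs, sq_abs]
  ring

lemma Dir_expand (D : Set E3) (hD : Bornology.IsBounded D)
    (φ ψ : E3 → ℝ) (hφ : ContDiff ℝ 1 φ) (hψ : ContDiff ℝ 1 ψ) (s t : ℝ) :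
    Dir D (fun x => s * (φ x + t * ψ x)) =
      s^2 * (Dir D φ + t * (∫ x in D, ⟪gradient φ x, gradient ψ x⟫) + t^2 * Dir D ψ) := by
  have hgφ := continuous_gradient hφ
  have hgψ := continuous_gradient hψ
  have hu : IntegrableOn (fun x => ‖gradient φ x‖^2) D :=
    integrableOn_of_cont hD ((hgφ.norm).pow 2)
  have hw : IntegrableOn (fun x => ⟪gradient φ x, gradient ψ x⟫) D :=
    integrableOn_of_cont hD (hgφ.inner hgψ)
  have hv : IntegrableOn (fun x => ‖gradient ψ x‖^2) D :=
    integrableOn_of_cont hD ((hgψ.norm).pow 2)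
  have h1 : ∀ x, ‖gradient (fun y => s * (φ y + t * ψ y)) x‖^2
      = s^2*‖gradient φ x‖^2 + ((2*s^2*t)*⟪gradient φ x, gradient ψ x⟫
        + (s^2*t^2)*‖gradient ψ x‖^2) := by
    intro x
    have he : (fun y => s * (φ y + t * ψ y)) = fun y => s * φ y + (s*t) * ψ y := by
      funext y; ring
    rw [he, gradient_comb φ ψ (hφ.differentiable one_ne_zero) (hψ.differentiable one_ne_zero),
      norm_comb_sq]
    ring
  have hvw : Integrable (fun x => (2*s^2*t)*⟪gradient φ x, gradient ψ x⟫
      + (s^2*t^2)*‖gradient ψ x‖^2) (volume.restrict D) :=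
    (hw.const_mul _).add (hv.const_mul _)
  unfold Dir
  simp only [h1]
  rw [integral_add (hu.const_mul (s^2)) hvw,
    integral_add (hw.const_mul (2*s^2*t)) (hv.const_mul (s^2*t^2)),
    integral_const_mul, integral_const_mul, integral_const_mul]
  ring

lemma Surf_expand (F : Set E2) (hF : Bornology.IsBounded F) (Bo : ℝ)
    (φ ψ : E2 → ℝ) (hφ : ContDiff ℝ 1 φ) (hψ : ContDiff ℝ 1 ψ) (s t : ℝ) :
    Surf F Bo (fun p => s * (φ p + t * ψ p)) =
      s^2 * (Surf F Bo φ
        + t * (∫ p in F, (φ p * ψ p + Bo⁻¹ * ⟪gradient φ p, gradient ψ p⟫))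
        + t^2 * Surf F Bo ψ) := by
  have hgφ := continuous_gradient hφ
  have hgψ := continuous_gradient hψ
  have hu : IntegrableOn (fun p => φ p ^ 2 + Bo⁻¹ * ‖gradient φ p‖^2) F :=
    integrableOn_of_cont hF (((hφ.continuous).pow 2).add (continuous_const.mul ((hgφ.norm).pow 2)))
  have hw : IntegrableOn (fun p => φ p * ψ p + Bo⁻¹ * ⟪gradient φ p, gradient ψ p⟫) F :=
    integrableOn_of_cont hF (((hφ.continuous).mul (hψ.continuous)).add
      (continuous_const.mul (hgφ.inner hgψ)))
  have hv : IntegrableOn (fun p => ψ p ^ 2 + Bo⁻¹ * ‖gradient ψ p‖^2) F :=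
    integrableOn_of_cont hF (((hψ.continuous).pow 2).add (continuous_const.mul ((hgψ.norm).pow 2)))
  have h1 : ∀ p, ((fun q => s * (φ q + t * ψ q)) p) ^ 2
        + Bo⁻¹ * ‖gradient (fun q => s * (φ q + t * ψ q)) p‖^2
      = s^2*(φ p ^ 2 + Bo⁻¹ * ‖gradient φ p‖^2)
        + ((2*s^2*t)*(φ p * ψ p + Bo⁻¹ * ⟪gradient φ p, gradient ψ p⟫)
        + (s^2*t^2)*(ψ p ^ 2 + Bo⁻¹ * ‖gradient ψ p‖^2)) := by
    intro p
    have he : (fun q => s * (φ q + t * ψ q)) = fun q => s * φ q + (s*t) * ψ q := by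
      funext q; ring
    rw [he, gradient_comb φ ψ (hφ.differentiable one_ne_zero) (hψ.differentiable one_ne_zero),
      norm_comb_sq]
    ring
  have hvw : Integrable (fun p => (2*s^2*t)*(φ p * ψ p + Bo⁻¹ * ⟪gradient φ p, gradient ψ p⟫)
      + (s^2*t^2)*(ψ p ^ 2 + Bo⁻¹ * ‖gradient ψ p‖^2)) (volume.restrict F) :=
    (hw.const_mul _).add (hv.const_mul _)
  unfold Surf
  simp only [h1]
  rw [integral_add (hu.const_mul (s^2)) hvw,
    integral_add (hw.const_mul (2*s^2*t)) (hv.const_mul (s^2*t^2)),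
    integral_const_mul, integral_const_mul, integral_const_mul]
  ring

set_option maxHeartbeats 2000000 in
/-- Euler–Lagrange part of Theorem 1.1. A minimizer `(Φ₁,ξ₁)` of
`D[Φ] + S[ξ]` over `𝒜` subject to `⟨Φ,ξ⟩_F = 1` is, with `ω₁ = D[Φ₁] + S[ξ₁]`,
a weak solution of the sloshing problem with surface tension. -/
theorem minimizer_is_weakSol
    (D : Set E3) (F : Set E2)
    (hD : Bornology.IsBounded D) (hF : Bornology.IsBounded F)
    (hDm : MeasurableSet D) (hFm : MeasurableSet F)
    (Bo : ℝ) (hBo : 0 < Bo)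
    (Φ₁ : E3 → ℝ) (ξ₁ : E2 → ℝ)
    (hadm : Adm F Φ₁ ξ₁) (hpair : pairF F Φ₁ ξ₁ = 1)
    (hmin : ∀ Φ : E3 → ℝ, ∀ ξ : E2 → ℝ, Adm F Φ ξ → pairF F Φ ξ = 1 →
      Dir D Φ₁ + Surf F Bo ξ₁ ≤ Dir D Φ + Surf F Bo ξ) :
    IsWeakSol D F Bo (Dir D Φ₁ + Surf F Bo ξ₁) Φ₁ ξ₁ := by
  obtain ⟨hΦ₁, hξ₁, hΦ₁0, hξ₁0⟩ := hadm
  have hΦ₁c := hΦ₁.continuous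
  have hξ₁c := hξ₁.continuous
  have hpair' : (∫ p in F, Φ₁ (emb p) * ξ₁ p) = 1 := hpair
  -- measure facts
  have hμF0 : volume F ≠ 0 := by
    intro h0
    rw [pairF, Measure.restrict_eq_zero.mpr h0] at hpair
    simp at hpair
  have hμFfin : volume F < ⊤ := hF.measure_lt_top
  have hμFpos : 0 < (volume F).toReal := ENNReal.toReal_pos hμF0 hμFfin.ne
  -- equipartition: Dir D Φ₁ = Surf F Bo ξ₁
  have hDS : Dir D Φ₁ = Surf F Bo ξ₁ := by
    have key : ∀ t : ℝ, |t| < 1 →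
        0 ≤ (Dir D Φ₁ - Surf F Bo ξ₁) * t + Dir D Φ₁ * t^2 := by
      intro t ht
      obtain ⟨ht1, ht2⟩ := abs_lt.mp ht
      have hpos : (0:ℝ) < 1 + t := by linarith
      set lam := Real.sqrt (1+t) with hlamdef
      have hlam : 0 < lam := Real.sqrt_pos.mpr hpos
      have hlam2 : lam^2 = 1 + t := Real.sq_sqrt hpos.le
      have hΦe : (fun x => lam * Φ₁ x) = (fun x => lam * (Φ₁ x + 0 * Φ₁ x)) := by
        funext x; ring
      have hξe : (fun p => lam⁻¹ * ξ₁ p) = (fun p => lam⁻¹ * (ξ₁ p + 0 * ξ₁ p)) := by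
        funext p; ring
      have hAdm : Adm F (fun x => lam * Φ₁ x) (fun p => lam⁻¹ * ξ₁ p) := by
        refine ⟨contDiff_const.mul hΦ₁, contDiff_const.mul hξ₁, ?_, ?_⟩
        · show (∫ p in F, lam * Φ₁ (emb p)) = 0
          rw [integral_const_mul, hΦ₁0, mul_zero]
        · show (∫ p in F, lam⁻¹ * ξ₁ p) = 0
          rw [integral_const_mul, hξ₁0, mul_zero]
      have hp : pairF F (fun x => lam * Φ₁ x) (fun p => lam⁻¹ * ξ₁ p) = 1 := by
        unfold pairF
        have hpe : ∀ p : E2, lam * Φ₁ (emb p) * (lam⁻¹ * ξ₁ p) = Φ₁ (emb p) * ξ₁ p := by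
          intro p; field_simp
        simp only [hpe]
        exact hpair'
      have hDir : Dir D (fun x => lam * Φ₁ x) = (1+t) * Dir D Φ₁ := by
        rw [hΦe, Dir_expand D hD Φ₁ Φ₁ hΦ₁ hΦ₁ lam 0, hlam2]; ring
      have hSurf : Surf F Bo (fun p => lam⁻¹ * ξ₁ p) = (1+t)⁻¹ * Surf F Bo ξ₁ := by
        have hli : lam⁻¹^2 = (1+t)⁻¹ := by rw [inv_pow, hlam2]
        rw [hξe, Surf_expand F hF Bo ξ₁ ξ₁ hξ₁ hξ₁ lam⁻¹ 0, hli]; ring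
      have hle := hmin _ _ hAdm hp
      rw [hDir, hSurf] at hle
      have h2 : (Dir D Φ₁ + Surf F Bo ξ₁) * (1+t)
          ≤ (1+t)^2 * Dir D Φ₁ + Surf F Bo ξ₁ := by
        calc (Dir D Φ₁ + Surf F Bo ξ₁) * (1+t)
            ≤ ((1+t) * Dir D Φ₁ + (1+t)⁻¹ * Surf F Bo ξ₁) * (1+t) :=
              mul_le_mul_of_nonneg_right hle hpos.le
          _ = (1+t)^2 * Dir D Φ₁ + Surf F Bo ξ₁ := by field_simp
      nlinarith [h2]
    have h0 := lin_of_quad one_pos key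
    linarith
  refine ⟨hΦ₁, hξ₁, ?_, ?_⟩
  · -- the kinematic identity (K)
    intro f hf
    have hfc := hf.continuous
    set c : ℝ := (∫ p in F, f (emb p)) / (volume F).toReal with hc
    set ft : E3 → ℝ := fun x => f x - c with hft
    have hftC : ContDiff ℝ 1 ft := hf.sub contDiff_const
    have hftembc : Continuous fun p => ft (emb p) :=
      (hfc.sub continuous_const).comp continuous_emb
    have hIfemb : IntegrableOn (fun p => f (emb p)) F :=
      integrableOn_of_cont hF (hfc.comp continuous_emb)
    have hft0 : (∫ p in F, ft (emb p)) = 0 := by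
      simp only [hft]
      rw [integral_sub hIfemb (integrableOn_const hμFfin.ne),
        setIntegral_const, smul_eq_mul, hc, measureReal_def]
      field_simp
      ring
    set A := ∫ x in D, ⟪gradient Φ₁ x, gradient ft x⟫ with hA
    set B := Dir D ft with hB
    set C := ∫ p in F, ft (emb p) * ξ₁ p with hC
    have hIft : IntegrableOn (fun p => ft (emb p) * ξ₁ p) F :=
      integrableOn_of_cont hF (hftembc.mul hξ₁c)
    have hIΦemb : IntegrableOn (fun p => Φ₁ (emb p)) F :=
      integrableOn_of_cont hF (hΦ₁c.comp continuous_emb)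
    have hIΦξ : IntegrableOn (fun p => Φ₁ (emb p) * ξ₁ p) F :=
      integrableOn_of_cont hF ((hΦ₁c.comp continuous_emb).mul hξ₁c)
    have hδ : (0:ℝ) < (1+|C|)⁻¹ := by positivity
    have key : ∀ t : ℝ, |t| < (1+|C|)⁻¹ →
        0 ≤ (A - 2*C*Dir D Φ₁) * t + (B - C^2*Dir D Φ₁) * t^2 := by
      intro t ht
      have htC : |t*C| < 1 := by
        rw [abs_mul]
        calc |t| * |C| ≤ |t| * (1+|C|) := by nlinarith [abs_nonneg t, abs_nonneg C]
          _ < (1+|C|)⁻¹ * (1+|C|) := mul_lt_mul_of_pos_right ht (by positivity)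
          _ = 1 := by field_simp
      have h1tC : 0 < 1 + t*C := by
        obtain ⟨hh1, hh2⟩ := abs_lt.mp htC; linarith
      set s := (1 + t*C)⁻¹ with hs
      have hAdmt : Adm F (fun x => s * (Φ₁ x + t * ft x)) ξ₁ := by
        refine ⟨contDiff_const.mul (hΦ₁.add (contDiff_const.mul hftC)), hξ₁, ?_, hξ₁0⟩
        show (∫ p in F, s * (Φ₁ (emb p) + t * ft (emb p))) = 0
        rw [integral_comb hIΦemb (integrableOn_of_cont hF hftembc) s t, hΦ₁0, hft0]
        ring
      have hpt : pairF F (fun x => s * (Φ₁ x + t * ft x)) ξ₁ = 1 := by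
        unfold pairF
        have hpe : ∀ p : E2, s * (Φ₁ (emb p) + t * ft (emb p)) * ξ₁ p
            = s * (Φ₁ (emb p) * ξ₁ p + t * (ft (emb p) * ξ₁ p)) := fun p => by ring
        simp only [hpe]
        rw [integral_comb hIΦξ hIft s t, hpair', ← hC, hs]
        exact inv_mul_cancel₀ h1tC.ne'
      have hle := hmin _ _ hAdmt hpt
      rw [Dir_expand D hD Φ₁ ft hΦ₁ hftC s t] at hle
      rw [← hA, ← hB] at hle
      have hle2 : Dir D Φ₁ ≤ s^2 * (Dir D Φ₁ + t*A + t^2*B) := by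
        linarith [hle]
      have hs2 : s^2 * (1+t*C)^2 = 1 := by rw [hs]; field_simp
      have h2 : Dir D Φ₁ * (1+t*C)^2 ≤ Dir D Φ₁ + t*A + t^2*B := by
        calc Dir D Φ₁ * (1+t*C)^2
            ≤ s^2 * (Dir D Φ₁ + t*A + t^2*B) * (1+t*C)^2 :=
              mul_le_mul_of_nonneg_right hle2 (by positivity)
          _ = (Dir D Φ₁ + t*A + t^2*B) * (s^2 * (1+t*C)^2) := by ring
          _ = Dir D Φ₁ + t*A + t^2*B := by rw [hs2]; ring
      nlinarith [h2]
    have hAeq : A - 2*C*Dir D Φ₁ = 0 := lin_of_quad hδ key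
    have hgradft : ∀ x : E3, gradient ft x = gradient f x := by
      intro x; rw [hft]; exact gradient_sub_const f c x
    have hL : (∫ x in D, ⟪gradient Φ₁ x, gradient f x⟫) = A := by
      rw [hA]; simp only [hgradft]
    have hR : (∫ p in F, ξ₁ p * f (emb p)) = C := by
      have h1 : ∀ p : E2, ξ₁ p * f (emb p) = ft (emb p) * ξ₁ p + c * ξ₁ p := by
        intro p; simp only [hft]; ring
      simp only [h1]
      rw [integral_add hIft ((integrableOn_of_cont hF hξ₁c).const_mul c),
        integral_const_mul, hξ₁0, ← hC]
      ring
    rw [hL, hR]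
    linear_combination hAeq + C * hDS
  · -- the dynamic identity (D)
    intro g hg
    have hgc := hg.continuous
    set c : ℝ := (∫ p in F, g p) / (volume F).toReal with hc
    set gt : E2 → ℝ := fun p => g p - c with hgt
    have hgtC : ContDiff ℝ 1 gt := hg.sub contDiff_const
    have hgtc : Continuous gt := hgc.sub continuous_const
    have hIg : IntegrableOn g F := integrableOn_of_cont hF hgc
    have hgt0 : (∫ p in F, gt p) = 0 := by
      simp only [hgt]
      rw [integral_sub hIg (integrableOn_const hμFfin.ne),
        setIntegral_const, smul_eq_mul, hc, measureReal_def]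
      field_simp
      ring
    set A := ∫ p in F, (ξ₁ p * gt p + Bo⁻¹ * ⟪gradient ξ₁ p, gradient gt p⟫) with hA
    set B := Surf F Bo gt with hB
    set C := ∫ p in F, Φ₁ (emb p) * gt p with hC
    have hIΦemb : IntegrableOn (fun p => Φ₁ (emb p)) F :=
      integrableOn_of_cont hF (hΦ₁c.comp continuous_emb)
    have hIΦgt : IntegrableOn (fun p => Φ₁ (emb p) * gt p) F :=
      integrableOn_of_cont hF ((hΦ₁c.comp continuous_emb).mul hgtc)
    have hIΦξ : IntegrableOn (fun p => Φ₁ (emb p) * ξ₁ p) F :=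
      integrableOn_of_cont hF ((hΦ₁c.comp continuous_emb).mul hξ₁c)
    have hIξ : IntegrableOn ξ₁ F := integrableOn_of_cont hF hξ₁c
    have hIA : IntegrableOn (fun p => ξ₁ p * gt p + Bo⁻¹ * ⟪gradient ξ₁ p, gradient gt p⟫) F :=
      integrableOn_of_cont hF ((hξ₁c.mul hgtc).add
        (continuous_const.mul ((continuous_gradient hξ₁).inner (continuous_gradient hgtC))))
    have hδ : (0:ℝ) < (1+|C|)⁻¹ := by positivity
    have key : ∀ t : ℝ, |t| < (1+|C|)⁻¹ →
        0 ≤ (A - 2*C*Surf F Bo ξ₁) * t + (B - C^2*Surf F Bo ξ₁) * t^2 := by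
      intro t ht
      have htC : |t*C| < 1 := by
        rw [abs_mul]
        calc |t| * |C| ≤ |t| * (1+|C|) := by nlinarith [abs_nonneg t, abs_nonneg C]
          _ < (1+|C|)⁻¹ * (1+|C|) := mul_lt_mul_of_pos_right ht (by positivity)
          _ = 1 := by field_simp
      have h1tC : 0 < 1 + t*C := by
        obtain ⟨hh1, hh2⟩ := abs_lt.mp htC; linarith
      set s := (1 + t*C)⁻¹ with hs
      have hAdmt : Adm F Φ₁ (fun p => s * (ξ₁ p + t * gt p)) := by
        refine ⟨hΦ₁, contDiff_const.mul (hξ₁.add (contDiff_const.mul hgtC)), hΦ₁0, ?_⟩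
        show (∫ p in F, s * (ξ₁ p + t * gt p)) = 0
        rw [integral_comb hIξ (integrableOn_of_cont hF hgtc) s t, hξ₁0, hgt0]
        ring
      have hpt : pairF F Φ₁ (fun p => s * (ξ₁ p + t * gt p)) = 1 := by
        unfold pairF
        have hpe : ∀ p : E2, Φ₁ (emb p) * (s * (ξ₁ p + t * gt p))
            = s * (Φ₁ (emb p) * ξ₁ p + t * (Φ₁ (emb p) * gt p)) := fun p => by ring
        simp only [hpe]
        rw [integral_comb hIΦξ hIΦgt s t, hpair', ← hC, hs]
        exact inv_mul_cancel₀ h1tC.ne'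
      have hle := hmin _ _ hAdmt hpt
      rw [Surf_expand F hF Bo ξ₁ gt hξ₁ hgtC s t] at hle
      rw [← hA, ← hB] at hle
      have hle2 : Surf F Bo ξ₁ ≤ s^2 * (Surf F Bo ξ₁ + t*A + t^2*B) := by
        linarith [hle]
      have hs2 : s^2 * (1+t*C)^2 = 1 := by rw [hs]; field_simp
      have h2 : Surf F Bo ξ₁ * (1+t*C)^2 ≤ Surf F Bo ξ₁ + t*A + t^2*B := by
        calc Surf F Bo ξ₁ * (1+t*C)^2
            ≤ s^2 * (Surf F Bo ξ₁ + t*A + t^2*B) * (1+t*C)^2 :=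
              mul_le_mul_of_nonneg_right hle2 (by positivity)
          _ = (Surf F Bo ξ₁ + t*A + t^2*B) * (s^2 * (1+t*C)^2) := by ring
          _ = Surf F Bo ξ₁ + t*A + t^2*B := by rw [hs2]; ring
      nlinarith [h2]
    have hAeq : A - 2*C*Surf F Bo ξ₁ = 0 := lin_of_quad hδ key
    have hL : (∫ p in F, (ξ₁ p * g p + Bo⁻¹ * ⟪gradient ξ₁ p, gradient g p⟫)) = A := by
      have h1 : ∀ p : E2, ξ₁ p * g p + Bo⁻¹ * ⟪gradient ξ₁ p, gradient g p⟫
          = (ξ₁ p * gt p + Bo⁻¹ * ⟪gradient ξ₁ p, gradient gt p⟫) + c * ξ₁ p := by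
        intro p
        have hgr : gradient gt p = gradient g p := by
          rw [hgt]; exact gradient_sub_const g c p
        rw [hgr]; simp only [hgt]
        ring
      simp only [h1]
      rw [integral_add hIA (hIξ.const_mul c), integral_const_mul, hξ₁0, ← hA]
      ring
    have hR : (∫ p in F, Φ₁ (emb p) * g p) = C := by
      have h1 : ∀ p : E2, Φ₁ (emb p) * g p = Φ₁ (emb p) * gt p + c * Φ₁ (emb p) := by
        intro p; simp only [hgt]; ring
      simp only [h1]
      rw [integral_add hIΦgt (hIΦemb.const_mul c),
        integral_const_mul, hΦ₁0, ← hC]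
      ring
    rw [hL, hR]
    linear_combination hAeq + C * hDS.symm
end
end

section
/- For a bounded measurable set Ω ⊆ ℝ³ define ω₁(Ω) as the infimum of (1/2)∫_Ω ‖∇Φ(x)‖² dx + S[ξ] over all (Φ,ξ) ∈ 𝒜 with ⟨Φ,ξ⟩_F = 1. Let D̃ ⊆ D be bounded measurable sets in ℝ³, and assume there exists at least one pair (Φ,ξ) ∈ 𝒜 with ⟨Φ,ξ⟩_F = 1. Then ω₁(D̃) ≤ ω₁(D). -/
open MeasureTheory RealInnerProductSpace

noncomputable section

lemma dir_nonneg (D : Set E3) (Φ : E3 → ℝ) : 0 ≤ Dir D Φ := by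
  unfold Dir
  have : 0 ≤ ∫ x in D, ‖gradient Φ x‖^2 :=
    integral_nonneg fun x => sq_nonneg _
  positivity

lemma surf_nonneg (F : Set E2) (Bo : ℝ) (hBo : 0 < Bo) (ξ : E2 → ℝ) :
    0 ≤ Surf F Bo ξ := by
  unfold Surf
  have : 0 ≤ ∫ p in F, (ξ p ^ 2 + Bo⁻¹ * ‖gradient ξ p‖^2) :=
    integral_nonneg fun p => add_nonneg (sq_nonneg _)
      (mul_nonneg (inv_nonneg.2 hBo.le) (sq_nonneg _))
  positivity

lemma grad_cont {n : ℕ} {Φ : EuclideanSpace ℝ (Fin n) → ℝ} (h : ContDiff ℝ 1 Φ) :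
    Continuous (gradient Φ) := by
  have hf := (contDiff_one_iff_fderiv.mp h).2
  exact (InnerProductSpace.toDual ℝ (EuclideanSpace ℝ (Fin n))).symm.continuous.comp hf

lemma dir_mono (D Dt : Set E3) (hDb : Bornology.IsBounded D) (hDm : MeasurableSet D)
    (hsub : Dt ⊆ D) {Φ : E3 → ℝ} (hΦ : ContDiff ℝ 1 Φ) : Dir Dt Φ ≤ Dir D Φ := by
  unfold Dir
  have hcont : Continuous fun x : E3 => ‖gradient Φ x‖^2 :=
    ((grad_cont hΦ).norm).pow 2
  have hInt : IntegrableOn (fun x : E3 => ‖gradient Φ x‖^2) D volume :=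
    (hcont.continuousOn.integrableOn_compact hDb.isCompact_closure).mono_set
      subset_closure
  have := setIntegral_mono_set hInt
    (Filter.Eventually.of_forall fun x => sq_nonneg _)
    (HasSubset.Subset.eventuallyLE hsub)
  linarith

/-- Theorem 4.3, domain monotonicity. If `D̃ ⊆ D` share the same
free surface `F`, then the fundamental sloshing eigenvalue of the smaller container
is at most that of the larger one. -/
theorem domain_monotonicity
    (F : Set E2) (hF : Bornology.IsBounded F) (hFm : MeasurableSet F)
    (Bo : ℝ) (hBo : 0 < Bo)
    (D Dt : Set E3) (hDb : Bornology.IsBounded D) (hDtb : Bornology.IsBounded Dt)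
    (hDm : MeasurableSet D) (hDtm : MeasurableSet Dt)
    (hsub : Dt ⊆ D)
    (hne : ∃ Φ : E3 → ℝ, ∃ ξ : E2 → ℝ, Adm F Φ ξ ∧ pairF F Φ ξ = 1) :
    sInf {r : ℝ | ∃ Φ : E3 → ℝ, ∃ ξ : E2 → ℝ, Adm F Φ ξ ∧ pairF F Φ ξ = 1 ∧
        r = Dir Dt Φ + Surf F Bo ξ}
      ≤ sInf {r : ℝ | ∃ Φ : E3 → ℝ, ∃ ξ : E2 → ℝ, Adm F Φ ξ ∧ pairF F Φ ξ = 1 ∧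
        r = Dir D Φ + Surf F Bo ξ} := by
  obtain ⟨Φ₀, ξ₀, hA0, hp0⟩ := hne
  have hbdd : BddBelow {r : ℝ | ∃ Φ : E3 → ℝ, ∃ ξ : E2 → ℝ, Adm F Φ ξ ∧ pairF F Φ ξ = 1 ∧
      r = Dir Dt Φ + Surf F Bo ξ} := by
    refine ⟨0, ?_⟩
    rintro r ⟨Φ, ξ, hA, hp, rfl⟩
    exact add_nonneg (dir_nonneg _ _) (surf_nonneg _ _ hBo _)
  refine le_csInf ⟨_, Φ₀, ξ₀, hA0, hp0, rfl⟩ ?_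
  rintro b ⟨Φ, ξ, hA, hp, rfl⟩
  calc sInf _ ≤ Dir Dt Φ + Surf F Bo ξ := csInf_le hbdd ⟨Φ, ξ, hA, hp, rfl⟩
    _ ≤ Dir D Φ + Surf F Bo ξ :=
      add_le_add_left (dir_mono D Dt hDb hDm hsub hA.1) _
end
end

section
/- Let ω₁ > 0 and let Φ₁ : ℝ³ → ℝ, ξ₁ : ℝ² → ℝ be C¹ functions with (Φ₁,ξ₁) ∈ 𝒜 and ⟨Φ₁,ξ₁⟩_F = 1 such that: (K) for every C¹ f : ℝ³ → ℝ, ∫_D ⟨∇Φ₁(x), ∇f(x)⟩ dx = ω₁ ∫_F ξ₁(p) f(p,0) dp; (D₀) for every C¹ g : ℝ² → ℝ, ∫_F ξ₁(p) g(p) dp = ω₁ ∫_F Φ₁(p,0) g(p) dp; and (Φ₁,ξ₁) minimizes the zero-surface-tension energy, i.e. D[Φ₁] + S₀[ξ₁] ≤ D[Φ] + S₀[ξ] for every (Φ,ξ) ∈ 𝒜 with ⟨Φ,ξ⟩_F = 1, where ω₁ = D[Φ₁] + S₀[ξ₁]. Then: (i) ∫_F (√ω₁·Φ₁(p,0))²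 dp = 1; (ii) ∫_D ‖∇(√ω₁·Φ₁)(x)‖² dx = ω₁²; and (iii) for every C¹ function Ψ : ℝ³ → ℝ with ∫_F Ψ(p,0) dp = 0 and ∫_F Ψ(p,0)² dp = 1 one has ∫_D ‖∇Ψ(x)‖² dx ≥ ω₁². -/
open MeasureTheory RealInnerProductSpace

noncomputable section

/-- The zero-surface-tension (Bo = ∞) free surface energy `S₀[ξ] = (1/2)∫_F ξ²`. -/
def Surf0 (F : Set E2) (ξ : E2 → ℝ) : ℝ := (1/2) * ∫ p in F, ξ p ^ 2

lemma contDiff_emb : ContDiff ℝ 1 emb := by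
  have h1 : ContDiff ℝ 1 (fun p : E2 => (![p 0, p 1, 0] : Fin 3 → ℝ)) := by
    apply contDiff_pi.2
    intro i
    fin_cases i <;> simp <;>
      first
        | exact (EuclideanSpace.proj (0 : Fin 2) : E2 →L[ℝ] ℝ).contDiff
        | exact (EuclideanSpace.proj (1 : Fin 2) : E2 →L[ℝ] ℝ).contDiff
        | exact contDiff_const
  exact ((PiLp.continuousLinearEquiv 2 ℝ (fun _ : Fin 3 => ℝ)).symm :
    (Fin 3 → ℝ) ≃L[ℝ] E3).contDiff.comp h1

lemma gradient_const_mul' (c : ℝ) {f : E3 → ℝ} {x : E3} (h : DifferentiableAt ℝ f x) :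
    gradient (fun y => c * f y) x = c • gradient f x := by
  unfold gradient
  rw [fderiv_const_mul h c]
  simp [_root_.map_smul]

lemma norm_sq_gradient_const_mul (c : ℝ) {f : E3 → ℝ} (h : ContDiff ℝ 1 f) (x : E3) :
    ‖gradient (fun y => c * f y) x‖ ^ 2 = c ^ 2 * ‖gradient f x‖ ^ 2 := by
  rw [gradient_const_mul' c (h.differentiable one_ne_zero x), norm_smul]
  rw [mul_pow]
  simp [sq_abs]

/-- Corollary 5.1. In the zero surface tension limit, a minimizer
`(Φ₁,ξ₁)` of the coupled variational problem yields, after rescaling by `√ω₁`, a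
normalized minimizer of the mixed Steklov–Neumann variational principle. -/
theorem zero_surface_tension_limit
    (D : Set E3) (F : Set E2)
    (hD : Bornology.IsBounded D) (hF : Bornology.IsBounded F)
    (hDm : MeasurableSet D) (hFm : MeasurableSet F)
    (ω₁ : ℝ) (hω₁ : 0 < ω₁)
    (Φ₁ : E3 → ℝ) (ξ₁ : E2 → ℝ)
    (hadm : Adm F Φ₁ ξ₁) (hpair : pairF F Φ₁ ξ₁ = 1)
    (hK : ∀ f : E3 → ℝ, ContDiff ℝ 1 f →
      (∫ x in D, ⟪gradient Φ₁ x, gradient f x⟫) = ω₁ * ∫ p in F, ξ₁ p * f (emb p))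
    (hD0 : ∀ g : E2 → ℝ, ContDiff ℝ 1 g →
      (∫ p in F, ξ₁ p * g p) = ω₁ * ∫ p in F, Φ₁ (emb p) * g p)
    (hmin : ∀ Φ : E3 → ℝ, ∀ ξ : E2 → ℝ, Adm F Φ ξ → pairF F Φ ξ = 1 →
      Dir D Φ₁ + Surf0 F ξ₁ ≤ Dir D Φ + Surf0 F ξ)
    (hval : ω₁ = Dir D Φ₁ + Surf0 F ξ₁) :
    (∫ p in F, (Real.sqrt ω₁ * Φ₁ (emb p)) ^ 2) = 1 ∧
    (∫ x in D, ‖gradient (fun y => Real.sqrt ω₁ * Φ₁ y) x‖ ^ 2) = ω₁ ^ 2 ∧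
    (∀ Ψ : E3 → ℝ, ContDiff ℝ 1 Ψ →
      (∫ p in F, Ψ (emb p)) = 0 → (∫ p in F, Ψ (emb p) ^ 2) = 1 →
      ω₁ ^ 2 ≤ ∫ x in D, ‖gradient Ψ x‖ ^ 2) := by
  obtain ⟨hΦ1, hξ1, hzΦ, hzξ⟩ := hadm
  have hω₁' : ω₁ ≠ 0 := ne_of_gt hω₁
  have hsq : Real.sqrt ω₁ ^ 2 = ω₁ := Real.sq_sqrt hω₁.le
  have hsqpos : 0 < Real.sqrt ω₁ := Real.sqrt_pos.2 hω₁
  -- (i): use hD0 with g = Φ₁ ∘ emb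
  have hΦemb : ContDiff ℝ 1 (fun p : E2 => Φ₁ (emb p)) := hΦ1.comp contDiff_emb
  have h1 := hD0 (fun p => Φ₁ (emb p)) hΦemb
  have hpair' : (∫ p in F, ξ₁ p * Φ₁ (emb p)) = 1 := by
    rw [← hpair, pairF]; simp_rw [mul_comm]
  have hI : (∫ p in F, Φ₁ (emb p) ^ 2) = ω₁⁻¹ := by
    have : (1 : ℝ) = ω₁ * ∫ p in F, Φ₁ (emb p) ^ 2 := by
      rw [← hpair', h1]; simp_rw [sq]
    field_simp at this ⊢
    linarith
  have goal1 : (∫ p in F, (Real.sqrt ω₁ * Φ₁ (emb p)) ^ 2) = 1 := by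
    simp_rw [mul_pow, hsq]
    rw [integral_const_mul, hI, mul_inv_cancel₀ hω₁']
  refine ⟨goal1, ?_, ?_⟩
  · -- (ii): use hK with f = Φ₁
    have h2 := hK Φ₁ hΦ1
    have hii : (∫ x in D, ‖gradient Φ₁ x‖ ^ 2) = ω₁ := by
      have : (∫ x in D, ⟪gradient Φ₁ x, gradient Φ₁ x⟫) = ∫ x in D, ‖gradient Φ₁ x‖ ^ 2 := by
        congr 1; funext x; rw [real_inner_self_eq_norm_sq]
      rw [this] at h2
      rw [h2, hpair', mul_one]
    have hpt : ∀ x : E3, ‖gradient (fun y => Real.sqrt ω₁ * Φ₁ y) x‖ ^ 2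
        = ω₁ * ‖gradient Φ₁ x‖ ^ 2 := by
      intro x; rw [norm_sq_gradient_const_mul _ hΦ1, hsq]
    simp_rw [hpt]
    rw [integral_const_mul, hii, sq]
  · -- (iii): comparison with rescaled test pair
    intro Ψ hΨ hz hn
    set a : ℝ := (Real.sqrt ω₁)⁻¹ with ha
    have ha2 : a ^ 2 = ω₁⁻¹ := by rw [ha, inv_pow, hsq]
    have hab : a * Real.sqrt ω₁ = 1 := inv_mul_cancel₀ (ne_of_gt hsqpos)
    set Φ : E3 → ℝ := fun y => a * Ψ y with hΦdef
    set ξ : E2 → ℝ := fun p => Real.sqrt ω₁ * Ψ (emb p) with hξdef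
    have hΨemb : ContDiff ℝ 1 (fun p : E2 => Ψ (emb p)) := hΨ.comp contDiff_emb
    have hadm' : Adm F Φ ξ := by
      refine ⟨contDiff_const.mul hΨ, contDiff_const.mul hΨemb, ?_, ?_⟩
      · rw [show (∫ p in F, Φ (emb p)) = ∫ p in F, a * Ψ (emb p) from rfl,
          integral_const_mul, hz, mul_zero]
      · rw [show (∫ p in F, ξ p) = ∫ p in F, Real.sqrt ω₁ * Ψ (emb p) from rfl,
          integral_const_mul, hz, mul_zero]
    have hpairΦξ : pairF F Φ ξ = 1 := by
      rw [pairF]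
      have : ∀ p : E2, Φ (emb p) * ξ p = (a * Real.sqrt ω₁) * Ψ (emb p) ^ 2 := by
        intro p; simp only [hΦdef, hξdef]; ring
      simp_rw [this]
      rw [integral_const_mul, hn, mul_one, hab]
    have hDir : Dir D Φ = ω₁⁻¹ * Dir D Ψ := by
      rw [Dir, Dir]
      have hpt : ∀ x : E3, ‖gradient Φ x‖ ^ 2 = ω₁⁻¹ * ‖gradient Ψ x‖ ^ 2 := by
        intro x
        rw [hΦdef, norm_sq_gradient_const_mul _ hΨ, ha2]
      simp_rw [hpt]
      rw [integral_const_mul]; ring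
    have hSurf : Surf0 F ξ = ω₁ / 2 := by
      rw [Surf0]
      have : ∀ p : E2, ξ p ^ 2 = ω₁ * Ψ (emb p) ^ 2 := by
        intro p; rw [hξdef]; rw [mul_pow, hsq]
      simp_rw [this]
      rw [integral_const_mul, hn]; ring
    have hineq := hmin Φ ξ hadm' hpairΦξ
    rw [← hval, hDir, hSurf] at hineq
    have hDirΨ : Dir D Ψ = (1/2) * ∫ x in D, ‖gradient Ψ x‖ ^ 2 := rfl
    rw [hDirΨ] at hineq
    set I : ℝ := ∫ x in D, ‖gradient Ψ x‖ ^ 2 with hIdef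
    -- hineq : ω₁ ≤ ω₁⁻¹ * ((1/2) * I) + ω₁ / 2
    have hmul := mul_le_mul_of_nonneg_left hineq hω₁.le
    rw [mul_add] at hmul
    have : ω₁ * (ω₁⁻¹ * ((1/2) * I)) = (1/2) * I := by
      rw [← mul_assoc, mul_inv_cancel₀ hω₁', one_mul]
    rw [this] at hmul
    nlinarith [hmul]
end
end
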